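/- For every real n × n matrix M, the square of its trace is at most its rank times its squared Frobenius norm: (trace M)² ≤ (rank M) · ∑_{i,j} (M i j)². -/

import Mathlib

/-- For every real `n × n` matrix `M`,
`(trace M)² ≤ rank M · ‖M‖_F²` where `‖M‖_F² = ∑_{i,j} (M i j)²`. -/
theorem sq_trace_le_rank_mul_sq_frobenius {n : ℕ} (M : Matrix (Fin n) (Fin n) ℝ) :
    (Matrix.trace M) ^ 2 ≤ (M.rank : ℝ) * ∑ i, ∑ j, (M i j) ^ 2 := by
  classical
  set b : Module.Basis (Fin n) ℝ (EuclideanSpace ℝ (Fin n)) := PiLp.basisFun 2 ℝ (Fin n) with hb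
  set f : EuclideanSpace ℝ (Fin n) →ₗ[ℝ] EuclideanSpace ℝ (Fin n) := Matrix.toEuclideanLin M
    with hf
  set K : Submodule ℝ (EuclideanSpace ℝ (Fin n)) := LinearMap.range f with hK
  set P : EuclideanSpace ℝ (Fin n) →ₗ[ℝ] EuclideanSpace ℝ (Fin n) :=
    K.subtype ∘ₗ (K.orthogonalProjectionOnto :
      EuclideanSpace ℝ (Fin n) →L[ℝ] K).toLinearMap with hP
  have hmem : ∀ x, P x ∈ K := fun x => (K.orthogonalProjectionOnto x).2
  have hfix : ∀ x ∈ K, P x = x := fun x hx => K.starProjection_eq_self_iff.mpr hx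
  have hproj : LinearMap.IsProj K P := ⟨hmem, hfix⟩
  have hPf : P ∘ₗ f = f := LinearMap.ext fun x => hfix _ ⟨x, rfl⟩
  have hPP : P ∘ₗ P = P := LinearMap.ext fun x => hfix _ (hmem x)
  set Q : Matrix (Fin n) (Fin n) ℝ := LinearMap.toMatrix b b P with hQ
  have htoM : LinearMap.toMatrix b b f = M := by
    have : f = Matrix.toLin b b M := rfl
    rw [this, LinearMap.toMatrix_toLin]
  have hQM : Q * M = M := by
    rw [← htoM, hQ, ← LinearMap.toMatrix_comp b b b, hPf]
  have hQQ : Q * Q = Q := by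
    rw [hQ, ← LinearMap.toMatrix_comp b b b, hPP]
  -- entries of Q as inner products
  have hent : ∀ i j, Q i j = inner ℝ (EuclideanSpace.single i (1 : ℝ)) (P (b j)) := by
    intro i j
    rw [hQ, LinearMap.toMatrix_apply]
    have h1 : b.repr (P (b j)) i = (P (b j)) i := by
      simp [hb, PiLp.basisFun_repr]
    rw [h1, EuclideanSpace.inner_single_left]
    simp
  have hbsingle : ∀ i, b i = EuclideanSpace.single i (1 : ℝ) := by
    intro i
    rw [hb, PiLp.basisFun_apply]
  have hsym : ∀ i j, Q i j = Q j i := by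
    intro i j
    rw [hent i j, hent j i, hbsingle, hbsingle]
    have := K.inner_starProjection_left_eq_right
      (EuclideanSpace.single i (1 : ℝ)) (EuclideanSpace.single j (1 : ℝ))
    have hPu : ∀ u, P u = K.starProjection u := fun u => rfl
    rw [hPu, hPu, ← this, real_inner_comm]
  have htrQ : Matrix.trace Q = (M.rank : ℝ) := by
    have h1 : Matrix.trace Q = LinearMap.trace ℝ _ P := by
      rw [hQ, ← LinearMap.trace_eq_matrix_trace]
    have h2 : LinearMap.trace ℝ _ P = (Module.finrank ℝ K : ℝ) := hproj.trace
    have h3 : M.rank = Module.finrank ℝ K := by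
      rw [Matrix.rank_eq_finrank_range_toLin M b b]
      rfl
    rw [h1, h2, h3]
  -- numeric part
  have haux : Matrix.trace (Q * M) = ∑ p : Fin n × Fin n, Q p.1 p.2 * M p.2 p.1 := by
    rw [Matrix.trace]
    simp only [Matrix.diag, Matrix.mul_apply]
    rw [Fintype.sum_prod_type]
  have key1 : Matrix.trace M = ∑ p : Fin n × Fin n, Q p.1 p.2 * M p.2 p.1 := by
    rw [← haux, hQM]
  have haux2 : Matrix.trace (Q * Q) = ∑ p : Fin n × Fin n, Q p.1 p.2 * Q p.2 p.1 := by
    rw [Matrix.trace]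
    simp only [Matrix.diag, Matrix.mul_apply]
    rw [Fintype.sum_prod_type]
  have key2 : ∑ p : Fin n × Fin n, (Q p.1 p.2) ^ 2 = (M.rank : ℝ) := by
    have h : ∑ p : Fin n × Fin n, (Q p.1 p.2) ^ 2 =
        ∑ p : Fin n × Fin n, Q p.1 p.2 * Q p.2 p.1 :=
      Finset.sum_congr rfl fun p _ => by rw [sq, hsym p.2 p.1]
    rw [h, ← haux2, hQQ, htrQ]
  have key3 : ∑ p : Fin n × Fin n, (M p.2 p.1) ^ 2 = ∑ i, ∑ j, (M i j) ^ 2 := by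
    rw [Fintype.sum_prod_type]
    exact Finset.sum_comm
  calc (Matrix.trace M) ^ 2
      = (∑ p : Fin n × Fin n, Q p.1 p.2 * M p.2 p.1) ^ 2 := by rw [key1]
    _ ≤ (∑ p : Fin n × Fin n, (Q p.1 p.2) ^ 2) * ∑ p : Fin n × Fin n, (M p.2 p.1) ^ 2 :=
        Finset.sum_mul_sq_le_sq_mul_sq _ _ _
    _ = (M.rank : ℝ) * ∑ i, ∑ j, (M i j) ^ 2 := by rw [key2, key3]
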